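/- Let k ≥ 1 be an integer, let r ∈ (0,1) with r ≠ 1/2, and let G₀, G₁, …, G_k be independent Exp(1)-distributed random variables. For ρ > 1 define P_k(ρ) = P{ Σ_{i=1}^{k} log₂( 1 + (ρ/2)(3G₀ + G_i) + (ρ²/2)G₀² ) < 2k·r·log₂ ρ }. Then lim_{ρ→∞} ln P_k(ρ) / ln ρ = −( (1−r) + k·(1−2r)^+ ), where (x)^+ = max(x,0). -/

import Mathlib

open MeasureTheory ProbabilityTheory Filter
open scoped ENNReal

/-- An Exp(1)-distributed random variable: P{X > t} = e^{−t} for all t ≥ 0. -/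
def IsExp1 {Ω : Type*} [MeasurableSpace Ω] (μ : Measure Ω) (X : Ω → ℝ) : Prop :=
  Measurable X ∧ ∀ t : ℝ, 0 ≤ t → μ {ω | t < X ω} = ENNReal.ofReal (Real.exp (-t))

section Aux
variable {Ω : Type*} [MeasurableSpace Ω] {μ : Measure Ω} [IsProbabilityMeasure μ] {X : Ω → ℝ}

lemma exp1_lt_le (hX : IsExp1 μ X) {t : ℝ} (ht : 0 ≤ t) :
    μ (X ⁻¹' Set.Iio t) ≤ ENNReal.ofReal t := by
  have hms : MeasurableSet {ω | t < X ω} := hX.1 measurableSet_Ioi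
  have h1 : μ (X ⁻¹' Set.Iio t) ≤ μ {ω | t < X ω}ᶜ := by
    apply measure_mono
    intro ω hω
    simp only [Set.mem_compl_iff, Set.mem_setOf_eq, not_lt]
    exact le_of_lt hω
  have h2 : μ {ω | t < X ω}ᶜ = 1 - ENNReal.ofReal (Real.exp (-t)) := by
    rw [prob_compl_eq_one_sub hms, hX.2 t ht]
  rw [h2] at h1
  refine h1.trans ?_
  rcases le_or_gt t 1 with h | h
  · have : ENNReal.ofReal (1 - t) ≤ ENNReal.ofReal (Real.exp (-t)) := by
      apply ENNReal.ofReal_le_ofReal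
      linarith [Real.add_one_le_exp (-t)]
    calc (1 : ℝ≥0∞) - ENNReal.ofReal (Real.exp (-t)) ≤ 1 - ENNReal.ofReal (1 - t) :=
          tsub_le_tsub_left this _
      _ = ENNReal.ofReal 1 - ENNReal.ofReal (1 - t) := by rw [ENNReal.ofReal_one]
      _ = ENNReal.ofReal (1 - (1 - t)) := (ENNReal.ofReal_sub _ (by linarith)).symm
      _ = ENNReal.ofReal t := by ring_nf
  · calc (1 : ℝ≥0∞) - ENNReal.ofReal (Real.exp (-t)) ≤ 1 := tsub_le_self
      _ = ENNReal.ofReal 1 := ENNReal.ofReal_one.symm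
      _ ≤ ENNReal.ofReal t := ENNReal.ofReal_le_ofReal h.le

lemma exp1_Ioc_ge (hX : IsExp1 μ X) {t : ℝ} (ht0 : 0 < t) (ht1 : t ≤ 1) :
    ENNReal.ofReal (t / 12) ≤ μ (X ⁻¹' Set.Ioc (t / 3) (t / 2)) := by
  have hseteq : X ⁻¹' Set.Ioc (t / 3) (t / 2) = {ω | t / 3 < X ω} \ {ω | t / 2 < X ω} := by
    ext ω
    simp only [Set.mem_preimage, Set.mem_Ioc, Set.mem_diff, Set.mem_setOf_eq, not_lt]
  have hsub : {ω | t / 2 < X ω} ⊆ {ω | t / 3 < X ω} := by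
    intro ω hω
    simp only [Set.mem_setOf_eq] at hω ⊢
    linarith
  have hm2 : MeasurableSet {ω | t / 2 < X ω} := hX.1 measurableSet_Ioi
  rw [hseteq, measure_diff hsub hm2.nullMeasurableSet (measure_ne_top μ _),
    hX.2 _ (by linarith), hX.2 _ (by linarith),
    ← ENNReal.ofReal_sub _ (Real.exp_nonneg _)]
  apply ENNReal.ofReal_le_ofReal
  have h1 : Real.exp (-(t/2)) * (t / 6) ≤ Real.exp (-(t/2)) * (Real.exp (t/6) - 1) := by
    apply mul_le_mul_of_nonneg_left _ (Real.exp_nonneg _)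
    linarith [Real.add_one_le_exp (t/6)]
  have h2 : Real.exp (-(t/2)) * (Real.exp (t/6) - 1) = Real.exp (-(t/3)) - Real.exp (-(t/2)) := by
    rw [mul_sub, ← Real.exp_add]; ring_nf
  have h3 : (1:ℝ)/2 ≤ Real.exp (-(t/2)) := by
    have := Real.add_one_le_exp (-(t/2)); linarith
  nlinarith [Real.exp_nonneg (-(t/2))]

lemma exp1_nonpos_null (hX : IsExp1 μ X) : μ {ω | X ω ≤ 0} = 0 := by
  have h : ∀ n : ℕ, μ {ω | X ω ≤ 0} ≤ ENNReal.ofReal (1 - Real.exp (-(1/(n+1)))) := by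
    intro n
    have hpos : (0:ℝ) < 1/(n+1) := by positivity
    have hms : MeasurableSet {ω | (1:ℝ)/(n+1) < X ω} := hX.1 measurableSet_Ioi
    have hsub : {ω | X ω ≤ 0} ⊆ {ω | (1:ℝ)/(n+1) < X ω}ᶜ := by
      intro ω hω
      simp only [Set.mem_compl_iff, Set.mem_setOf_eq, not_lt]
      exact le_trans hω (by positivity)
    calc μ {ω | X ω ≤ 0} ≤ μ {ω | (1:ℝ)/(n+1) < X ω}ᶜ := measure_mono hsub
      _ = 1 - ENNReal.ofReal (Real.exp (-(1/(n+1)))) := by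
          rw [prob_compl_eq_one_sub hms, hX.2 _ hpos.le]
      _ ≤ ENNReal.ofReal (1 - Real.exp (-(1/(n+1)))) := by
          rw [tsub_le_iff_right, ← ENNReal.ofReal_add (by
            have := Real.exp_le_one_iff.mpr (neg_nonpos.mpr (by positivity : (0:ℝ) ≤ 1/((n:ℝ)+1)))
            linarith) (Real.exp_nonneg _)]
          simp
  have hlim : Tendsto (fun n : ℕ => ENNReal.ofReal (1 - Real.exp (-(1/(n+1))))) atTop (nhds 0) := by
    have : Tendsto (fun n : ℕ => (1:ℝ)/(n+1)) atTop (nhds 0) := tendsto_one_div_add_atTop_nhds_zero_nat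
    have t1 : Tendsto (fun n : ℕ => -((1:ℝ)/(n+1))) atTop (nhds 0) := by
      simpa using this.neg
    have t2 : Tendsto (fun n : ℕ => Real.exp (-((1:ℝ)/(n+1)))) atTop (nhds 1) := by
      simpa [Function.comp_def] using (Real.continuous_exp.tendsto 0).comp t1
    have h2 : Tendsto (fun n : ℕ => 1 - Real.exp (-(1/(n+1)))) atTop (nhds 0) := by
      have := (tendsto_const_nhds (x := (1:ℝ)) (f := atTop (α := ℕ))).sub t2
      simpa [one_div] using this
    simpa [Function.comp_def] using (ENNReal.continuous_ofReal.tendsto 0).comp h2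
  exact le_antisymm (ge_of_tendsto' hlim (fun n => h n) |>.trans_eq (by simp)) zero_le

end Aux

lemma ev_le_rpow {a c K ε : ℝ} (h : a < c) (hε : 0 < ε) :
    ∀ᶠ ρ : ℝ in atTop, K * ρ ^ a ≤ ε * ρ ^ c := by
  have T : Tendsto (fun ρ : ℝ => K * ρ ^ (a - c)) atTop (nhds 0) := by
    have t1 := (tendsto_rpow_neg_atTop (by linarith : 0 < c - a)).const_mul K
    simpa [neg_sub] using t1
  filter_upwards [eventually_ge_atTop (1:ℝ),
    T.eventually (eventually_le_nhds hε)] with ρ h1 h2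
  have hρ : (0:ℝ) < ρ := lt_of_lt_of_le zero_lt_one h1
  have key := mul_le_mul_of_nonneg_right h2 (Real.rpow_nonneg hρ.le c)
  calc K * ρ ^ a = K * ρ ^ (a - c) * ρ ^ c := by
        rw [mul_assoc, ← Real.rpow_add hρ, sub_add_cancel]
    _ ≤ ε * ρ ^ c := key

lemma poly_bound {r : ℝ} (hr0 : 0 < r) (hr1 : r < 1) :
    ∀ᶠ ρ : ℝ in atTop,
      1 + 3/4 * ρ ^ r + 1/4 * ρ ^ (1 - max (1 - 2*r) 0) ≤ 3/4 * ρ ^ (2*r) := by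
  rcases le_or_gt r (1/2) with hc | hc
  · have hb : 1 - max (1 - 2*r) 0 = 2*r := by
      rw [max_eq_left (by linarith)]; ring
    rw [hb]
    filter_upwards [ev_le_rpow (a := 0) (c := 2*r) (K := 1) (ε := 1/4)
        (by linarith) (by norm_num),
      ev_le_rpow (a := r) (c := 2*r) (K := 3/4) (ε := 1/4) (by linarith) (by norm_num)]
      with ρ e1 e2
    rw [Real.rpow_zero, mul_one] at e1
    linarith
  · have hb : 1 - max (1 - 2*r) 0 = 1 := by
      rw [max_eq_right (by linarith)]; ring
    rw [hb]
    filter_upwards [ev_le_rpow (a := 0) (c := 2*r) (K := 1) (ε := 1/4)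
        (by linarith) (by norm_num),
      ev_le_rpow (a := r) (c := 2*r) (K := 3/4) (ε := 1/4) (by linarith) (by norm_num),
      ev_le_rpow (a := 1) (c := 2*r) (K := 1/4) (ε := 1/4) (by linarith) (by norm_num)]
      with ρ e1 e2 e3
    rw [Real.rpow_zero, mul_one] at e1
    linarith

lemma sum_logb_bound {k : ℕ} (hk : 1 ≤ k) {r ρ : ℝ} (hρ : 1 < ρ) (hr0 : 0 < r)
    {a : ℝ} {g : Fin k → ℝ} (ha : 0 < a) (hg : ∀ i, 0 < g i)
    (hsum : ∑ i : Fin k, Real.logb 2 (1 + (ρ/2)*(3*a + g i) + (ρ^2/2)*a^2)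
      < 2*(k:ℝ)*r*Real.logb 2 ρ) :
    a < Real.sqrt 2 * ρ^(r-1) ∧
      (∑ i : Fin k, Real.logb 2 (1 + (ρ/2) * g i)) < 2*(k:ℝ)*r*Real.logb 2 ρ := by
  have hρ0 : (0:ℝ) < ρ := lt_trans zero_lt_one hρ
  have hW : ∀ i : Fin k, (0:ℝ) < 1 + (ρ/2)*(3*a + g i) + (ρ^2/2)*a^2 := by
    intro i; nlinarith [hg i, sq_nonneg a, sq_nonneg ρ]
  have hrpow : (2:ℝ) ^ (2*(k:ℝ)*r*Real.logb 2 ρ / k) = ρ^(2*r) := by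
    have hkpos : (0:ℝ) < k := by exact_mod_cast hk
    have h1 : 2*(k:ℝ)*r*Real.logb 2 ρ / k = Real.logb 2 ρ * (2*r) := by
      field_simp
    rw [h1, Real.rpow_mul (by norm_num : (0:ℝ) ≤ 2),
      Real.rpow_logb (by norm_num) (by norm_num) hρ0]
  constructor
  · -- each summand ≥ logb 2 (1 + (ρ²/2)a²)
    have hbase : ∀ i : Fin k,
        Real.logb 2 (1 + (ρ^2/2)*a^2) ≤
          Real.logb 2 (1 + (ρ/2)*(3*a + g i) + (ρ^2/2)*a^2) := by
      intro i
      apply Real.logb_le_logb_of_le one_lt_two (by nlinarith [sq_nonneg a, sq_nonneg ρ])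
      nlinarith [hg i]
    have hks : (k:ℝ) * Real.logb 2 (1 + (ρ^2/2)*a^2) ≤
        ∑ i : Fin k, Real.logb 2 (1 + (ρ/2)*(3*a + g i) + (ρ^2/2)*a^2) := by
      calc (k:ℝ) * Real.logb 2 (1 + (ρ^2/2)*a^2)
          = ∑ _i : Fin k, Real.logb 2 (1 + (ρ^2/2)*a^2) := by
            rw [Finset.sum_const, Finset.card_univ, Fintype.card_fin, nsmul_eq_mul]
        _ ≤ _ := Finset.sum_le_sum (fun i _ => hbase i)
    have hkpos : (0:ℝ) < k := by exact_mod_cast hk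
    have hlt : Real.logb 2 (1 + (ρ^2/2)*a^2) < 2*(k:ℝ)*r*Real.logb 2 ρ / k := by
      rw [lt_div_iff₀ hkpos]
      calc Real.logb 2 (1 + (ρ^2/2)*a^2) * k = (k:ℝ) * Real.logb 2 (1 + (ρ^2/2)*a^2) := by ring
        _ ≤ _ := hks
        _ < _ := hsum
    rw [Real.logb_lt_iff_lt_rpow one_lt_two (by nlinarith [sq_nonneg a, sq_nonneg ρ])] at hlt
    rw [hrpow] at hlt
    -- 1 + (ρ²/2)a² < ρ^{2r}  ⇒  a < √2 ρ^{r-1}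
    by_contra hcon
    push_neg at hcon
    have hs2 : (Real.sqrt 2 * ρ^(r-1))^2 = 2 * ρ^(2*r-2) := by
      rw [mul_pow, Real.sq_sqrt (by norm_num : (0:ℝ) ≤ 2),
        ← Real.rpow_natCast (ρ^(r-1)) 2, ← Real.rpow_mul hρ0.le]
      norm_num; congr 1; ring
    have hsq : 2 * ρ^(2*r-2) ≤ a^2 := by
      rw [← hs2]; exact pow_le_pow_left₀ (by positivity) hcon 2
    have hid : ρ^(2:ℕ) * ρ^(2*r-2) = ρ^(2*r) := by
      rw [← Real.rpow_natCast ρ 2, ← Real.rpow_add hρ0]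
      congr 1; push_cast; ring
    nlinarith [hsq, hlt, sq_nonneg ρ]
  · have : ∀ i : Fin k, Real.logb 2 (1 + (ρ/2)*g i) ≤
        Real.logb 2 (1 + (ρ/2)*(3*a + g i) + (ρ^2/2)*a^2) := by
      intro i
      apply Real.logb_le_logb_of_le one_lt_two (by nlinarith [hg i])
      nlinarith [sq_nonneg a, sq_nonneg ρ]
    calc ∑ i : Fin k, Real.logb 2 (1 + (ρ/2)*g i)
        ≤ ∑ i : Fin k, Real.logb 2 (1 + (ρ/2)*(3*a + g i) + (ρ^2/2)*a^2) :=
          Finset.sum_le_sum (fun i _ => this i)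
      _ < _ := hsum

lemma lower_bound {Ω : Type*} [MeasurableSpace Ω] (μ : Measure Ω) [IsProbabilityMeasure μ]
    (k : ℕ) (hk : 1 ≤ k) (r : ℝ) (hr0 : 0 < r) (hr1 : r < 1)
    (G : Fin (k + 1) → Ω → ℝ)
    (hG : ∀ i, IsExp1 μ (G i))
    (hindep : iIndepFun G μ) :
    ∀ᶠ ρ : ℝ in atTop,
      ENNReal.ofReal ((1/12)^(k+1) * ρ ^ (-((1 - r) + (k:ℝ) * max (1 - 2*r) 0))) ≤
      μ {ω | (∑ i : Fin k, Real.logb 2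
              (1 + (ρ / 2) * (3 * G 0 ω + G i.succ ω) + (ρ ^ 2 / 2) * (G 0 ω) ^ 2)) <
            2 * (k : ℝ) * r * Real.logb 2 ρ} := by
  have hb0 : (0:ℝ) ≤ max (1 - 2*r) 0 := le_max_right _ _
  set b := max (1 - 2*r) 0 with hbdef
  filter_upwards [eventually_gt_atTop (1:ℝ), poly_bound hr0 hr1] with ρ hρ1 hpoly
  have hρ0 : (0:ℝ) < ρ := lt_trans zero_lt_one hρ1
  set t : Fin (k+1) → ℝ := fun j => if j = 0 then ρ ^ (r - 1) else ρ ^ (-b) with htdef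
  have ht_pos : ∀ j, 0 < t j := by
    intro j; dsimp only [t]; split <;> positivity
  have ht_le1 : ∀ j, t j ≤ 1 := by
    intro j; dsimp only [t]; split
    · exact Real.rpow_le_one_of_one_le_of_nonpos hρ1.le (by linarith)
    · exact Real.rpow_le_one_of_one_le_of_nonpos hρ1.le (by linarith)
  -- the inclusion
  have hsub : (⋂ j, G j ⁻¹' Set.Ioc (t j / 3) (t j / 2)) ⊆
      {ω | (∑ i : Fin k, Real.logb 2
              (1 + (ρ / 2) * (3 * G 0 ω + G i.succ ω) + (ρ ^ 2 / 2) * (G 0 ω) ^ 2)) <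
            2 * (k : ℝ) * r * Real.logb 2 ρ} := by
    intro ω hω
    simp only [Set.mem_iInter, Set.mem_preimage, Set.mem_Ioc] at hω
    have h0 : ρ ^ (r-1) / 3 < G 0 ω ∧ G 0 ω ≤ ρ ^ (r-1) / 2 := by
      simpa [htdef] using hω 0
    have e1 : ρ * ρ ^ (r - 1) = ρ ^ r := by
      have h := Real.rpow_add hρ0 1 (r - 1)
      rw [Real.rpow_one] at h
      rw [← h]; congr 1 <;> ring
    have e3 : ρ * ρ ^ (-b) = ρ ^ (1 - b) := by
      have h := Real.rpow_add hρ0 1 (-b)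
      rw [Real.rpow_one] at h
      rw [← h]; congr 1 <;> ring
    have e2 : ρ ^ (2:ℕ) * (ρ ^ (r - 1)) ^ (2:ℕ) = ρ ^ (2*r) := by
      rw [← Real.rpow_natCast ρ 2, ← Real.rpow_natCast (ρ ^ (r-1)) 2,
        ← Real.rpow_mul hρ0.le, ← Real.rpow_add hρ0]
      congr 1 <;> push_cast <;> ring
    have key : ∀ i : Fin k,
        Real.logb 2 (1 + (ρ / 2) * (3 * G 0 ω + G i.succ ω) + (ρ ^ 2 / 2) * (G 0 ω) ^ 2)
          < 2 * r * Real.logb 2 ρ := by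
      intro i
      have hi : ρ ^ (-b) / 3 < G i.succ ω ∧ G i.succ ω ≤ ρ ^ (-b) / 2 := by
        simpa [htdef, Fin.succ_ne_zero] using hω i.succ
      have hWpos : (0:ℝ) < 1 + (ρ / 2) * (3 * G 0 ω + G i.succ ω) + (ρ ^ 2 / 2) * (G 0 ω) ^ 2 := by
        have p1 : (0:ℝ) < ρ ^ (r-1) := by positivity
        have p2 : (0:ℝ) < ρ ^ (-b) := by positivity
        nlinarith [h0.1, hi.1, sq_nonneg (G 0 ω), sq_nonneg ρ]
      have hsq : (G 0 ω) ^ 2 ≤ (ρ ^ (r-1) / 2) ^ 2 := by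
        have p1 : (0:ℝ) < ρ ^ (r-1) := by positivity
        have hg0 : 0 ≤ G 0 ω := by linarith [h0.1]
        exact pow_le_pow_left₀ hg0 h0.2 2
      have hWle : 1 + (ρ / 2) * (3 * G 0 ω + G i.succ ω) + (ρ ^ 2 / 2) * (G 0 ω) ^ 2
          ≤ 1 + 3/4 * ρ^r + 1/4 * ρ^(1-b) + 1/8 * ρ^(2*r) := by
        have l1 : (ρ/2) * (3 * G 0 ω + G i.succ ω) ≤ 3/4 * ρ^r + 1/4 * ρ^(1-b) := by
          have hh : 3 * G 0 ω + G i.succ ω ≤ 3 * (ρ^(r-1)/2) + ρ^(-b)/2 := by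
            linarith [h0.2, hi.2]
          calc (ρ/2) * (3*G 0 ω + G i.succ ω) ≤ (ρ/2) * (3*(ρ^(r-1)/2) + ρ^(-b)/2) :=
                mul_le_mul_of_nonneg_left hh (by linarith : (0:ℝ) ≤ ρ/2)
            _ = 3/4 * (ρ * ρ^(r-1)) + 1/4 * (ρ * ρ^(-b)) := by ring
            _ = 3/4 * ρ^r + 1/4*ρ^(1-b) := by rw [e1, e3]
        have l2 : (ρ^2/2) * (G 0 ω)^2 ≤ 1/8 * ρ^(2*r) := by
          calc (ρ^2/2) * (G 0 ω)^2 ≤ (ρ^2/2) * ((ρ^(r-1)/2)^2) :=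
                mul_le_mul_of_nonneg_left hsq (by positivity)
            _ = 1/8 * (ρ^(2:ℕ) * (ρ^(r-1))^(2:ℕ)) := by ring
            _ = 1/8 * ρ^(2*r) := by rw [e2]
        linarith
      rw [← hbdef] at hpoly
      have hQ : 1 + 3/4*ρ^r + 1/4*ρ^(1-b) + 1/8*ρ^(2*r) < ρ^(2*r) := by
        have hpos : (0:ℝ) < ρ^(2*r) := by positivity
        linarith
      have hfin := Real.logb_lt_logb (b := 2) one_lt_two hWpos (lt_of_le_of_lt hWle hQ)
      rwa [Real.logb_rpow_eq_mul_logb_of_pos hρ0] at hfin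
    have hne : Nonempty (Fin k) := ⟨⟨0, hk⟩⟩
    have hsum := Finset.sum_lt_sum_of_nonempty Finset.univ_nonempty (fun i _ => key i)
    have hconst : ∑ _i : Fin k, 2*r*Real.logb 2 ρ = 2*(k:ℝ)*r*Real.logb 2 ρ := by
      rw [Finset.sum_const, Finset.card_univ, Fintype.card_fin, nsmul_eq_mul]; ring
    simp only [Set.mem_setOf_eq]
    rw [hconst] at hsum
    exact hsum
  refine le_trans ?_ (measure_mono hsub)
  have hA : μ (⋂ j, G j ⁻¹' Set.Ioc (t j / 3) (t j / 2)) =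
      ∏ j, μ (G j ⁻¹' Set.Ioc (t j / 3) (t j / 2)) := by
    have hprod := hindep.measure_inter_preimage_eq_mul (S := Finset.univ)
      (sets := fun j => Set.Ioc (t j / 3) (t j / 2)) (fun j _ => measurableSet_Ioc)
    simpa using hprod
  rw [hA]
  have hge : ∀ j, ENNReal.ofReal (t j / 12) ≤ μ (G j ⁻¹' Set.Ioc (t j / 3) (t j / 2)) :=
    fun j => exp1_Ioc_ge (hG j) (ht_pos j) (ht_le1 j)
  refine le_trans ?_ (Finset.prod_le_prod' (fun j _ => hge j))
  rw [← ENNReal.ofReal_prod_of_nonneg (fun j _ => by positivity)]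
  apply ENNReal.ofReal_le_ofReal
  have h0t : t 0 = ρ^(r-1) := by simp [htdef]
  have hct : ∀ i : Fin k, t i.succ / 12 = ρ^(-b)/12 := fun i => by
    simp only [htdef, if_neg (Fin.succ_ne_zero i)]
  have hpk : ((ρ:ℝ)^(-b))^k = ρ^(-(b * k)) := by
    rw [← Real.rpow_natCast (ρ^(-b)) k, ← Real.rpow_mul hρ0.le]
    congr 1; ring
  have hpr : ∏ j, (t j / 12) = (1/12:ℝ)^(k+1) * ρ^(-((1 - r) + (k:ℝ) * b)) := by
    rw [Fin.prod_univ_succ, Finset.prod_congr rfl (fun i _ => hct i), Finset.prod_const,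
      Finset.card_univ, Fintype.card_fin, h0t]
    calc (ρ^(r-1)/12) * (ρ^(-b)/12)^k
        = (1/12:ℝ)^(k+1) * (ρ^(r-1) * (ρ^(-b))^k) := by rw [div_pow, div_pow, one_pow, pow_succ]; ring
      _ = (1/12:ℝ)^(k+1) * ρ^(-((1-r)+(k:ℝ)*b)) := by
          rw [hpk, ← Real.rpow_add hρ0]; congr 1; ring
  rw [hpr]

lemma upper_simple {Ω : Type*} [MeasurableSpace Ω] (μ : Measure Ω) [IsProbabilityMeasure μ]
    (k : ℕ) (hk : 1 ≤ k) (r : ℝ) (hr0 : 0 < r)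
    (G : Fin (k + 1) → Ω → ℝ)
    (hG : ∀ i, IsExp1 μ (G i)) :
    ∀ᶠ ρ : ℝ in atTop,
      μ {ω | (∑ i : Fin k, Real.logb 2
              (1 + (ρ / 2) * (3 * G 0 ω + G i.succ ω) + (ρ ^ 2 / 2) * (G 0 ω) ^ 2)) <
            2 * (k : ℝ) * r * Real.logb 2 ρ}
        ≤ ENNReal.ofReal (Real.sqrt 2 * ρ ^ (r - 1)) := by
  filter_upwards [eventually_gt_atTop (1:ℝ)] with ρ hρ1
  have hN : μ (⋃ j, {ω | G j ω ≤ 0}) = 0 :=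
    measure_iUnion_null fun j => exp1_nonpos_null (hG j)
  have hsub : {ω | (∑ i : Fin k, Real.logb 2
              (1 + (ρ / 2) * (3 * G 0 ω + G i.succ ω) + (ρ ^ 2 / 2) * (G 0 ω) ^ 2)) <
            2 * (k : ℝ) * r * Real.logb 2 ρ}
      ⊆ (⋃ j, {ω | G j ω ≤ 0}) ∪ (G 0 ⁻¹' Set.Iio (Real.sqrt 2 * ρ ^ (r - 1))) := by
    intro ω hωE
    by_cases hω : ω ∈ ⋃ j, {ω | G j ω ≤ 0}
    · exact Or.inl hω
    right
    simp only [Set.mem_iUnion, Set.mem_setOf_eq, not_exists, not_le] at hω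
    exact (sum_logb_bound hk hρ1 hr0 (hω 0) (fun i => hω i.succ) hωE).1
  calc μ _ ≤ μ ((⋃ j, {ω | G j ω ≤ 0}) ∪ (G 0 ⁻¹' Set.Iio (Real.sqrt 2 * ρ ^ (r - 1)))) :=
        measure_mono hsub
    _ ≤ μ (⋃ j, {ω | G j ω ≤ 0}) + μ (G 0 ⁻¹' Set.Iio (Real.sqrt 2 * ρ ^ (r - 1))) :=
        measure_union_le _ _
    _ = μ (G 0 ⁻¹' Set.Iio (Real.sqrt 2 * ρ ^ (r - 1))) := by rw [hN, zero_add]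
    _ ≤ ENNReal.ofReal (Real.sqrt 2 * ρ ^ (r - 1)) := exp1_lt_le (hG 0) (by positivity)


lemma upper_grid {Ω : Type*} [MeasurableSpace Ω] (μ : Measure Ω) [IsProbabilityMeasure μ]
    (k : ℕ) (hk : 1 ≤ k) (r : ℝ) (hr0 : 0 < r)
    (G : Fin (k + 1) → Ω → ℝ)
    (hG : ∀ i, (Measurable (G i) ∧ ∀ t : ℝ, 0 ≤ t → μ {ω | t < G i ω} = ENNReal.ofReal (Real.exp (-t))))
    (hindep : iIndepFun G μ) :
    ∀ᶠ ρ : ℝ in atTop,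
      μ {ω | (∑ i : Fin k, Real.logb 2
              (1 + (ρ / 2) * (3 * G 0 ω + G i.succ ω) + (ρ ^ 2 / 2) * (G 0 ω) ^ 2)) <
            2 * (k : ℝ) * r * Real.logb 2 ρ}
        ≤ ENNReal.ofReal
            (((⌊2*(k:ℝ)*r*Real.logb 2 ρ⌋₊ + 1 : ℕ) : ℝ)^k * (Real.sqrt 2 * 4^k) *
              ρ ^ (r - 1 - k*(1-2*r))) := by
  filter_upwards [eventually_gt_atTop (1:ℝ)] with ρ hρ1
  have hρ0 : (0:ℝ) < ρ := lt_trans zero_lt_one hρ1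
  set C := 2*(k:ℝ)*r*Real.logb 2 ρ with hCdef
  set M := ⌊C⌋₊ + 1 with hMdef
  set c : (Fin k → Fin M) → Fin (k+1) → ℝ :=
    fun v => Fin.cases (Real.sqrt 2 * ρ^(r-1)) (fun i => (4/ρ) * 2^(v i : ℕ)) with hcdef
  set F := Finset.univ.filter (fun v : Fin k → Fin M => ∑ i, ((v i : ℕ) : ℝ) ≤ C) with hFdef
  have hN : μ (⋃ j, {ω | G j ω ≤ 0}) = 0 :=
    measure_iUnion_null fun j => exp1_nonpos_null (hG j)
  -- inclusion
  have hsub : {ω | (∑ i : Fin k, Real.logb 2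
              (1 + (ρ / 2) * (3 * G 0 ω + G i.succ ω) + (ρ ^ 2 / 2) * (G 0 ω) ^ 2)) <
            2 * (k : ℝ) * r * Real.logb 2 ρ}
      ⊆ (⋃ j, {ω | G j ω ≤ 0}) ∪ ⋃ v ∈ F, ⋂ j, G j ⁻¹' Set.Iio (c v j) := by
    intro ω hωE
    by_cases hω : ω ∈ ⋃ j, {ω | G j ω ≤ 0}
    · exact Or.inl hω
    right
    simp only [Set.mem_iUnion, Set.mem_setOf_eq, not_exists, not_le] at hω
    obtain ⟨hg0, hgs⟩ := sum_logb_bound hk hρ1 hr0 (hω 0) (fun i => hω i.succ) hωE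
    set X : Fin k → ℝ := fun i => Real.logb 2 (1 + (ρ/2) * G i.succ ω) with hXdef
    have hX0 : ∀ i, 0 ≤ X i := fun i =>
      Real.logb_nonneg one_lt_two (by nlinarith [hω i.succ])
    have hXC : ∀ i, X i < C := fun i =>
      lt_of_le_of_lt (Finset.single_le_sum (fun j _ => hX0 j) (Finset.mem_univ i)) hgs
    have hvM : ∀ i, ⌊X i⌋₊ < M := fun i => by
      have := Nat.floor_le_floor (le_of_lt (hXC i))
      omega
    set v : Fin k → Fin M := fun i => ⟨⌊X i⌋₊, hvM i⟩ with hvdef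
    have hvF : v ∈ F := by
      simp only [hFdef, Finset.mem_filter, Finset.mem_univ, true_and]
      calc ∑ i, ((v i : ℕ) : ℝ) ≤ ∑ i, X i := by
            refine Finset.sum_le_sum (fun i _ => ?_)
            exact Nat.floor_le (hX0 i)
        _ ≤ C := le_of_lt hgs
    refine Set.mem_biUnion hvF ?_
    simp only [Set.mem_iInter, Set.mem_preimage, Set.mem_Iio]
    intro j
    induction j using Fin.cases with
    | zero => simpa [hcdef] using hg0
    | succ i =>
      have hcv : c v i.succ = (4/ρ) * 2^(⌊X i⌋₊ : ℕ) := by simp [hcdef, hvdef]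
      rw [hcv]
      have h1 : X i < (⌊X i⌋₊ : ℝ) + 1 := Nat.lt_floor_add_one _
      rw [hXdef] at h1
      simp only at h1
      rw [Real.logb_lt_iff_lt_rpow one_lt_two (by nlinarith [hω i.succ])] at h1
      have h2 : (2:ℝ) ^ ((⌊X i⌋₊:ℝ) + 1) = 2 * 2^(⌊X i⌋₊:ℕ) := by
        rw [Real.rpow_add two_pos, Real.rpow_one, Real.rpow_natCast]; ring
      rw [h2] at h1
      have hp : (0:ℝ) < 2^(⌊X i⌋₊:ℕ) := by positivity
      rw [show (4:ℝ)/ρ * 2^(⌊X i⌋₊:ℕ) = (4 * 2^(⌊X i⌋₊:ℕ))/ρ by ring, lt_div_iff₀ hρ0]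
      nlinarith [hω i.succ]
  -- measure computation
  have hterm : ∀ v ∈ F, μ (⋂ j, G j ⁻¹' Set.Iio (c v j)) ≤
      ENNReal.ofReal ((Real.sqrt 2 * 4^k) * ρ ^ (r - 1 - k*(1-2*r))) := by
    intro v hv
    have hprod : μ (⋂ j, G j ⁻¹' Set.Iio (c v j)) = ∏ j, μ (G j ⁻¹' Set.Iio (c v j)) := by
      have := hindep.measure_inter_preimage_eq_mul (S := Finset.univ)
        (sets := fun j => Set.Iio (c v j)) (fun j _ => measurableSet_Iio)
      simpa using this
    have hcpos : ∀ j, 0 ≤ c v j := by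
      intro j
      induction j using Fin.cases with
      | zero => simp only [hcdef, Fin.cases_zero]; positivity
      | succ i => simp only [hcdef, Fin.cases_succ]; positivity
    calc μ (⋂ j, G j ⁻¹' Set.Iio (c v j)) = ∏ j, μ (G j ⁻¹' Set.Iio (c v j)) := hprod
      _ ≤ ∏ j, ENNReal.ofReal (c v j) :=
          Finset.prod_le_prod' (fun j _ => exp1_lt_le (hG j) (hcpos j))
      _ = ENNReal.ofReal (∏ j, c v j) :=
          (ENNReal.ofReal_prod_of_nonneg (fun j _ => hcpos j)).symm
      _ ≤ ENNReal.ofReal ((Real.sqrt 2 * 4^k) * ρ ^ (r - 1 - k*(1-2*r))) := ?_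
    apply ENNReal.ofReal_le_ofReal
    have hpr : ∏ j, c v j = Real.sqrt 2 * ρ^(r-1) * ((4/ρ)^k * 2^(∑ i, (v i : ℕ))) := by
      have h0c : c v 0 = Real.sqrt 2 * ρ^(r-1) := by simp [hcdef]
      have hstep : ∀ i : Fin k, c v i.succ = (4/ρ) * 2^(v i : ℕ) := fun i => by simp [hcdef]
      rw [Fin.prod_univ_succ, h0c, Finset.prod_congr rfl (fun i _ => hstep i),
        Finset.prod_mul_distrib, Finset.prod_const, Finset.card_univ, Fintype.card_fin,
        Finset.prod_pow_eq_pow_sum]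
    rw [hpr]
    have hsumC : ((∑ i, (v i : ℕ) : ℕ) : ℝ) ≤ C := by
      rw [hFdef, Finset.mem_filter] at hv
      push_cast
      exact hv.2
    have h2C : (2:ℝ) ^ ((∑ i, (v i : ℕ) : ℕ) : ℝ) ≤ 2 ^ C :=
      Real.rpow_le_rpow_left_iff one_lt_two |>.mpr hsumC
    have h2Ceq : (2:ℝ) ^ C = ρ ^ (2*(k:ℝ)*r) := by
      rw [hCdef, show 2*(k:ℝ)*r*Real.logb 2 ρ = Real.logb 2 ρ * (2*(k:ℝ)*r) by ring,
        Real.rpow_mul (by norm_num : (0:ℝ) ≤ 2),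
        Real.rpow_logb (by norm_num) (by norm_num) hρ0]
    have hnp : (2:ℝ) ^ (∑ i, (v i : ℕ)) ≤ ρ ^ (2*(k:ℝ)*r) := by
      rw [← h2Ceq, ← Real.rpow_natCast 2 (∑ i, (v i : ℕ))]
      exact h2C
    have hfin : Real.sqrt 2 * ρ^(r-1) * ((4/ρ)^k * 2^(∑ i, (v i : ℕ)))
        ≤ Real.sqrt 2 * ρ^(r-1) * ((4/ρ)^k * ρ ^ (2*(k:ℝ)*r)) := by
      have h1 : (0:ℝ) ≤ Real.sqrt 2 * ρ^(r-1) := by positivity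
      have h2 : (0:ℝ) ≤ (4/ρ)^k := by positivity
      exact mul_le_mul_of_nonneg_left (mul_le_mul_of_nonneg_left hnp h2) h1
    refine hfin.trans (le_of_eq ?_)
    have hρk : (ρ:ℝ)^(k:ℕ) = ρ^((k:ℕ):ℝ) := (Real.rpow_natCast ρ k).symm
    rw [div_pow, hρk]
    rw [show Real.sqrt 2 * ρ^(r-1) * (4^k / ρ^((k:ℕ):ℝ) * ρ^(2*(k:ℝ)*r))
      = (Real.sqrt 2 * 4^k) * (ρ^(r-1) * ρ^(2*(k:ℝ)*r) / ρ^((k:ℕ):ℝ)) by ring]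
    congr 1
    rw [← Real.rpow_add hρ0, ← Real.rpow_sub hρ0]
    congr 1; ring
  calc μ _ ≤ μ ((⋃ j, {ω | G j ω ≤ 0}) ∪ ⋃ v ∈ F, ⋂ j, G j ⁻¹' Set.Iio (c v j)) :=
        measure_mono hsub
    _ ≤ μ (⋃ j, {ω | G j ω ≤ 0}) + μ (⋃ v ∈ F, ⋂ j, G j ⁻¹' Set.Iio (c v j)) :=
        measure_union_le _ _
    _ = μ (⋃ v ∈ F, ⋂ j, G j ⁻¹' Set.Iio (c v j)) := by rw [hN, zero_add]
    _ ≤ ∑ v ∈ F, μ (⋂ j, G j ⁻¹' Set.Iio (c v j)) := measure_biUnion_finset_le F _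
    _ ≤ ∑ _v ∈ F, ENNReal.ofReal ((Real.sqrt 2 * 4^k) * ρ ^ (r - 1 - k*(1-2*r))) :=
        Finset.sum_le_sum hterm
    _ = F.card • ENNReal.ofReal ((Real.sqrt 2 * 4^k) * ρ ^ (r - 1 - k*(1-2*r))) := by
        rw [Finset.sum_const]
    _ ≤ (M^k : ℕ) • ENNReal.ofReal ((Real.sqrt 2 * 4^k) * ρ ^ (r - 1 - k*(1-2*r))) := by
        refine nsmul_le_nsmul_left zero_le ?_
        calc F.card ≤ (Finset.univ : Finset (Fin k → Fin M)).card := Finset.card_le_univ F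
          _ = M^k := by rw [Finset.card_univ, Fintype.card_fun, Fintype.card_fin, Fintype.card_fin]
    _ = ENNReal.ofReal (((M:ℕ):ℝ)^k * ((Real.sqrt 2 * 4^k) * ρ ^ (r - 1 - k*(1-2*r)))) := by
        rw [nsmul_eq_mul, ← ENNReal.ofReal_natCast (M^k),
          ← ENNReal.ofReal_mul (by positivity)]
        push_cast
        ring_nf
    _ = ENNReal.ofReal (((⌊2*(k:ℝ)*r*Real.logb 2 ρ⌋₊ + 1 : ℕ) : ℝ)^k * (Real.sqrt 2 * 4^k) *
          ρ ^ (r - 1 - k*(1-2*r))) := by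
        rw [hMdef, hCdef]
        ring_nf

/-- diversity exponent of the outage probability of the Incomplete DF
scheme with k decoding relays: with G₀, G₁, …, G_k i.i.d. Exp(1) (G₀ indexed by 0 and
Gᵢ by i.succ), Pₖ(ρ) = P{Σᵢ₌₁ᵏ log₂(1 + (ρ/2)(3G₀+Gᵢ) + (ρ²/2)G₀²) < 2kr·log₂ ρ}
satisfies lim_{ρ→∞} ln Pₖ(ρ)/ln ρ = −((1−r) + k(1−2r)⁺). -/
theorem incomplete_df_k_relays_exponent {Ω : Type*} [MeasurableSpace Ω]
    (μ : Measure Ω) [IsProbabilityMeasure μ]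
    (k : ℕ) (hk : 1 ≤ k) (r : ℝ) (hr0 : 0 < r) (hr1 : r < 1) (hr2 : r ≠ 1 / 2)
    (G : Fin (k + 1) → Ω → ℝ) (hG : ∀ i, IsExp1 μ (G i))
    (hindep : iIndepFun G μ) :
    Tendsto (fun ρ : ℝ =>
        Real.log
          ((μ {ω | (∑ i : Fin k, Real.logb 2
              (1 + (ρ / 2) * (3 * G 0 ω + G i.succ ω) + (ρ ^ 2 / 2) * (G 0 ω) ^ 2)) <
            2 * (k : ℝ) * r * Real.logb 2 ρ}).toReal)
          / Real.log ρ)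
      atTop (nhds (-((1 - r) + (k : ℝ) * max (1 - 2 * r) 0))) := by
  set d : ℝ := (1 - r) + (k : ℝ) * max (1 - 2 * r) 0 with hd
  set P : ℝ → ℝ := fun ρ =>
    (μ {ω | (∑ i : Fin k, Real.logb 2
        (1 + (ρ / 2) * (3 * G 0 ω + G i.succ ω) + (ρ ^ 2 / 2) * (G 0 ω) ^ 2)) <
      2 * (k : ℝ) * r * Real.logb 2 ρ}).toReal with hP
  -- lower bound on P and positivity
  have hlo : ∀ᶠ ρ : ℝ in atTop, (1/12:ℝ)^(k+1) * ρ ^ (-d) ≤ P ρ := by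
    filter_upwards [lower_bound μ k hk r hr0 hr1 G hG hindep] with ρ h
    exact (ENNReal.ofReal_le_iff_le_toReal (measure_ne_top μ _)).mp h
  have hloglo : ∀ᶠ ρ : ℝ in atTop,
      -d + Real.log ((1/12:ℝ)^(k+1)) / Real.log ρ ≤ Real.log (P ρ) / Real.log ρ := by
    filter_upwards [hlo, eventually_gt_atTop (1:ℝ)] with ρ h hρ1
    have hρ0 : (0:ℝ) < ρ := lt_trans zero_lt_one hρ1
    have hL : (0:ℝ) < Real.log ρ := Real.log_pos hρ1
    have hcpos : (0:ℝ) < (1/12:ℝ)^(k+1) * ρ ^ (-d) := by positivity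
    have hlog := Real.log_le_log hcpos h
    rw [Real.log_mul (by positivity) (by positivity), Real.log_rpow hρ0] at hlog
    calc -d + Real.log ((1/12:ℝ)^(k+1)) / Real.log ρ
        = (Real.log ((1/12:ℝ)^(k+1)) + -d * Real.log ρ) / Real.log ρ := by
          field_simp
          ring
      _ ≤ Real.log (P ρ) / Real.log ρ := by
          exact (div_le_div_iff_of_pos_right hL).mpr hlog
  have hglo : Tendsto (fun ρ : ℝ => -d + Real.log ((1/12:ℝ)^(k+1)) / Real.log ρ)
      atTop (nhds (-d)) := by
    have h0 : Tendsto (fun ρ : ℝ => Real.log ((1/12:ℝ)^(k+1)) / Real.log ρ) atTop (nhds 0) :=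
      Tendsto.div_atTop tendsto_const_nhds Real.tendsto_log_atTop
    simpa using (tendsto_const_nhds (x := -d) (f := atTop (α := ℝ))).add h0
  have hgoal : -((1 - r) + (k : ℝ) * max (1 - 2 * r) 0) = -d := by rw [hd]
  rw [hgoal]
  rcases lt_or_gt_of_ne hr2 with hlt | hgt
  · -- r < 1/2 : grid bound
    have hmax : max (1 - 2*r) 0 = 1 - 2*r := max_eq_left (by linarith)
    have hdval : r - 1 - k*(1-2*r) = -d := by rw [hd, hmax]; ring
    set c2 : ℝ := Real.log (Real.sqrt 2 * 4^k) with hc2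
    have hup : ∀ᶠ ρ : ℝ in atTop, Real.log (P ρ) / Real.log ρ ≤
        -d + ((k:ℝ) * Real.log ((⌊2*(k:ℝ)*r*Real.logb 2 ρ⌋₊ + 1 : ℕ) : ℝ) + c2)
          / Real.log ρ := by
      filter_upwards [upper_grid μ k hk r hr0 G hG hindep, eventually_gt_atTop (1:ℝ), hlo]
        with ρ h hρ1 hl
      have hρ0 : (0:ℝ) < ρ := lt_trans zero_lt_one hρ1
      have hL : (0:ℝ) < Real.log ρ := Real.log_pos hρ1
      have hPpos : 0 < P ρ := lt_of_lt_of_le (by positivity) hl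
      set M : ℕ := ⌊2*(k:ℝ)*r*Real.logb 2 ρ⌋₊ + 1 with hM
      have hM1 : (1:ℝ) ≤ (M : ℝ) := by
        have : 1 ≤ M := Nat.succ_le_succ (Nat.zero_le _)
        exact_mod_cast this
      have hPle : P ρ ≤ (M : ℝ)^k * (Real.sqrt 2 * 4^k) * ρ^(r-1-k*(1-2*r)) :=
        ENNReal.toReal_le_of_le_ofReal (by positivity) h
      have hlog := Real.log_le_log hPpos hPle
      rw [Real.log_mul (by positivity) (by positivity),
        Real.log_mul (by positivity) (by positivity),
        Real.log_rpow hρ0, Real.log_pow] at hlog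
      calc Real.log (P ρ)/Real.log ρ
          ≤ ((k:ℝ)*Real.log (M:ℝ) + c2 + (r-1-k*(1-2*r))*Real.log ρ)/Real.log ρ := by
            apply (div_le_div_iff_of_pos_right hL).mpr
            rw [hc2]
            push_cast at hlog ⊢
            linarith [hlog]
        _ = (r-1-k*(1-2*r)) + ((k:ℝ)*Real.log (M:ℝ) + c2)/Real.log ρ := by
            field_simp
            ring
        _ = -d + ((k:ℝ)*Real.log (M:ℝ) + c2)/Real.log ρ := by rw [hdval]
    have h2pos : (0:ℝ) < Real.log 2 := Real.log_pos one_lt_two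
    set K : ℝ := 2*(k:ℝ)*r/Real.log 2 + 1 with hK
    have hKpos : (0:ℝ) < K := by positivity
    have hll : Tendsto (fun ρ : ℝ => Real.log (Real.log ρ)/Real.log ρ) atTop (nhds 0) := by
      have h := Real.isLittleO_log_id_atTop.comp_tendsto Real.tendsto_log_atTop
      simpa [Function.comp] using h.tendsto_div_nhds_zero
    have hT2 : Tendsto (fun ρ : ℝ => (k:ℝ)*(Real.log K + Real.log (Real.log ρ))/Real.log ρ)
        atTop (nhds 0) := by
      have h1 : Tendsto (fun ρ : ℝ => (k:ℝ)*Real.log K/Real.log ρ) atTop (nhds 0) :=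
        Tendsto.div_atTop tendsto_const_nhds Real.tendsto_log_atTop
      have h2 := h1.add (hll.const_mul (k:ℝ))
      have heq : ∀ ρ : ℝ, (k:ℝ)*Real.log K/Real.log ρ + (k:ℝ)*(Real.log (Real.log ρ)/Real.log ρ)
          = (k:ℝ)*(Real.log K + Real.log (Real.log ρ))/Real.log ρ := by
        intro ρ; ring
      simpa [heq] using h2
    have hbound : ∀ᶠ ρ : ℝ in atTop,
        (k:ℝ)*Real.log ((⌊2*(k:ℝ)*r*Real.logb 2 ρ⌋₊ + 1 : ℕ) : ℝ)/Real.log ρ ≤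
        (k:ℝ)*(Real.log K + Real.log (Real.log ρ))/Real.log ρ := by
      filter_upwards [eventually_ge_atTop (Real.exp 1)] with ρ hρe
      have hρ1 : (1:ℝ) < ρ := lt_of_lt_of_le (by
        have := Real.add_one_le_exp 1; linarith) hρe
      have hρ0 : (0:ℝ) < ρ := lt_trans zero_lt_one hρ1
      have hL1 : (1:ℝ) ≤ Real.log ρ := by
        rw [← Real.log_exp 1]
        exact Real.log_le_log (Real.exp_pos 1) hρe
      have hL : (0:ℝ) < Real.log ρ := by linarith
      have hC0 : (0:ℝ) ≤ 2*(k:ℝ)*r*Real.logb 2 ρ := by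
        have : (0:ℝ) ≤ Real.logb 2 ρ := Real.logb_nonneg one_lt_two hρ1.le
        positivity
      have hMle : ((⌊2*(k:ℝ)*r*Real.logb 2 ρ⌋₊ + 1 : ℕ) : ℝ) ≤ K * Real.log ρ := by
        have h1 : ((⌊2*(k:ℝ)*r*Real.logb 2 ρ⌋₊ : ℕ) : ℝ) ≤ 2*(k:ℝ)*r*Real.logb 2 ρ :=
          Nat.floor_le hC0
        have h2 : 2*(k:ℝ)*r*Real.logb 2 ρ = (2*(k:ℝ)*r/Real.log 2) * Real.log ρ := by
          rw [Real.logb]; ring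
        push_cast
        rw [hK]
        have h3 : (0:ℝ) ≤ 2*(k:ℝ)*r/Real.log 2 := by positivity
        nlinarith [h1, hL1]
      have hMpos : (0:ℝ) < ((⌊2*(k:ℝ)*r*Real.logb 2 ρ⌋₊ + 1 : ℕ) : ℝ) := by positivity
      have hlogM : Real.log ((⌊2*(k:ℝ)*r*Real.logb 2 ρ⌋₊ + 1 : ℕ) : ℝ) ≤
          Real.log K + Real.log (Real.log ρ) := by
        rw [← Real.log_mul (ne_of_gt hKpos) (by linarith)]
        exact Real.log_le_log hMpos hMle
      have hknn : (0:ℝ) ≤ (k:ℝ) := Nat.cast_nonneg k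
      apply (div_le_div_iff_of_pos_right hL).mpr
      exact mul_le_mul_of_nonneg_left hlogM hknn
    have hT1 : Tendsto (fun ρ : ℝ =>
        (k:ℝ)*Real.log ((⌊2*(k:ℝ)*r*Real.logb 2 ρ⌋₊ + 1 : ℕ) : ℝ)/Real.log ρ)
        atTop (nhds 0) := by
      apply squeeze_zero' _ hbound hT2
      filter_upwards [eventually_gt_atTop (1:ℝ)] with ρ hρ1
      have hL : (0:ℝ) < Real.log ρ := Real.log_pos hρ1
      have : (0:ℝ) ≤ Real.log ((⌊2*(k:ℝ)*r*Real.logb 2 ρ⌋₊ + 1 : ℕ) : ℝ) := by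
        apply Real.log_nonneg
        have : 1 ≤ (⌊2*(k:ℝ)*r*Real.logb 2 ρ⌋₊ + 1 : ℕ) := Nat.succ_le_succ (Nat.zero_le _)
        exact_mod_cast this
      positivity
    have hT0 : Tendsto (fun ρ : ℝ => c2 / Real.log ρ) atTop (nhds 0) :=
      Tendsto.div_atTop tendsto_const_nhds Real.tendsto_log_atTop
    have hupT : Tendsto (fun ρ : ℝ =>
        -d + ((k:ℝ) * Real.log ((⌊2*(k:ℝ)*r*Real.logb 2 ρ⌋₊ + 1 : ℕ) : ℝ) + c2)
          / Real.log ρ) atTop (nhds (-d)) := by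
      have h2 := (tendsto_const_nhds (x := -d) (f := atTop (α := ℝ))).add (hT1.add hT0)
      have heq : ∀ ρ : ℝ,
          -d + ((k:ℝ)*Real.log ((⌊2*(k:ℝ)*r*Real.logb 2 ρ⌋₊ + 1 : ℕ) : ℝ)/Real.log ρ
            + c2/Real.log ρ)
          = -d + ((k:ℝ) * Real.log ((⌊2*(k:ℝ)*r*Real.logb 2 ρ⌋₊ + 1 : ℕ) : ℝ) + c2)
            / Real.log ρ := by intro ρ; ring
      rw [show -d + ((0:ℝ) + 0) = -d by ring] at h2
      exact h2.congr heq
    exact tendsto_of_tendsto_of_tendsto_of_le_of_le' hglo hupT hloglo hup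
  · -- r > 1/2 : simple bound
    have hmax : max (1 - 2*r) 0 = 0 := max_eq_right (by linarith)
    have hdval : r - 1 = -d := by rw [hd, hmax]; ring
    have hup : ∀ᶠ ρ : ℝ in atTop, Real.log (P ρ) / Real.log ρ ≤
        -d + Real.log (Real.sqrt 2) / Real.log ρ := by
      filter_upwards [upper_simple μ k hk r hr0 G hG, eventually_gt_atTop (1:ℝ), hlo]
        with ρ h hρ1 hl
      have hρ0 : (0:ℝ) < ρ := lt_trans zero_lt_one hρ1
      have hL : (0:ℝ) < Real.log ρ := Real.log_pos hρ1
      have hPpos : 0 < P ρ := lt_of_lt_of_le (by positivity) hl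
      have hPle : P ρ ≤ Real.sqrt 2 * ρ^(r-1) :=
        ENNReal.toReal_le_of_le_ofReal (by positivity) h
      have hlog := Real.log_le_log hPpos hPle
      rw [Real.log_mul (by positivity) (by positivity), Real.log_rpow hρ0] at hlog
      calc Real.log (P ρ)/Real.log ρ
          ≤ (Real.log (Real.sqrt 2) + (r-1)*Real.log ρ)/Real.log ρ :=
            (div_le_div_iff_of_pos_right hL).mpr hlog
        _ = (r-1) + Real.log (Real.sqrt 2)/Real.log ρ := by field_simp; ring
        _ = -d + Real.log (Real.sqrt 2)/Real.log ρ := by rw [hdval]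
    have hupT : Tendsto (fun ρ : ℝ => -d + Real.log (Real.sqrt 2) / Real.log ρ)
        atTop (nhds (-d)) := by
      have h0 : Tendsto (fun ρ : ℝ => Real.log (Real.sqrt 2) / Real.log ρ) atTop (nhds 0) :=
        Tendsto.div_atTop tendsto_const_nhds Real.tendsto_log_atTop
      simpa using (tendsto_const_nhds (x := -d) (f := atTop (α := ℝ))).add h0
    exact tendsto_of_tendsto_of_tendsto_of_le_of_le' hglo hupT hloglo hup
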